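/- Let G be an undirected graph, s,t nonadjacent, D ⊆ V(G)\{s,t}, T a minimum ({s}∪D),t-separator, T' = N_G(C_s(G−T)), and G' = G[C_s(G−T) ∪ T' ∪ C_t(G−T)]. Then every minimal s,t-separator S of G' with S ⊆ T' ∪ C_t(G'−T') satisfies |S| ≥ |T'|. -/

import Mathlib

open SimpleGraph

variable {V : Type*}

/-- `u` can reach `v` in `G − S`: there is a walk whose support avoids `S`. -/
def ReachAvoid (G : SimpleGraph V) (S : Set V) (u v : V) : Prop :=
  ∃ p : G.Walk u v, ∀ w ∈ p.support, w ∉ S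

/-- The union of the connected components of `G − S` that meet `X`. -/
def SetReach (G : SimpleGraph V) (S X : Set V) : Set V :=
  {v | ∃ x ∈ X, ReachAvoid G S x v}

/-- Open neighborhood of a vertex set: vertices outside `X` adjacent to some vertex of `X`. -/
def Nbhd (G : SimpleGraph V) (X : Set V) : Set V :=
  {v | v ∉ X ∧ ∃ x ∈ X, G.Adj x v}

/-- `S` is an `A,B`-separator of `G`. -/
def IsSep (G : SimpleGraph V) (A B S : Set V) : Prop :=
  Disjoint S A ∧ Disjoint S B ∧ ∀ a ∈ A, ∀ b ∈ B, ¬ ReachAvoid G S a b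

/-- `S` is an inclusion-minimal `A,B`-separator of `G`. -/
def IsMinlSep (G : SimpleGraph V) (A B S : Set V) : Prop :=
  IsSep G A B S ∧ ∀ S' ⊂ S, ¬ IsSep G A B S'

/-- `S` is a minimum-cardinality `A,B`-separator of `G`. -/
def IsMinSep (G : SimpleGraph V) (A B S : Set V) : Prop :=
  IsSep G A B S ∧ ∀ S', IsSep G A B S' → S.ncard ≤ S'.ncard

/-- The minimum cardinality of an `A,B`-separator of `G` (`∞` if none exists). -/
noncomputable def kappa (G : SimpleGraph V) (A B : Set V) : ℕ∞ :=
  sInf {n : ℕ∞ | ∃ S : Set V, IsSep G A B S ∧ (S.ncard : ℕ∞) = n}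

/-- `S` is an `A,B`-separator of the induced subgraph `G[W]`. -/
def IsSepIn (G : SimpleGraph V) (W A B S : Set V) : Prop :=
  S ⊆ W ∧ Disjoint S A ∧ Disjoint S B ∧ ∀ a ∈ A, ∀ b ∈ B, ¬ ReachAvoid G (S ∪ Wᶜ) a b

/-- `S` is an inclusion-minimal `A,B`-separator of the induced subgraph `G[W]`. -/
def IsMinlSepIn (G : SimpleGraph V) (W A B S : Set V) : Prop :=
  IsSepIn G W A B S ∧ ∀ S' ⊂ S, ¬ IsSepIn G W A B S'

/-- Reach-avoidance is symmetric. -/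
lemma ReachAvoid.symm' {G : SimpleGraph V} {S : Set V} {u v : V}
    (h : ReachAvoid G S u v) : ReachAvoid G S v u := by
  obtain ⟨p, hp⟩ := h
  exact ⟨p.reverse, fun w hw => hp w (by simpa [SimpleGraph.Walk.support_reverse] using hw)⟩

lemma mem_setReach_singleton {G : SimpleGraph V} {S : Set V} {x v : V} :
    v ∈ SetReach G S {x} ↔ ReachAvoid G S x v := by
  simp [SetReach]

/-- Every vertex of a walk avoiding `S` that starts at `x` is reachable from `x` avoiding `S`. -/
lemma support_reachAvoid {G : SimpleGraph V} {S : Set V} {x v : V}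
    (p : G.Walk x v) (hp : ∀ w ∈ p.support, w ∉ S) :
    ∀ w ∈ p.support, ReachAvoid G S x w := by
  classical
  intro w hw
  exact ⟨p.takeUntil w hw, fun u hu => hp u (p.support_takeUntil_subset hw hu)⟩

/-- Members of `SetReach` avoid `S`. -/
lemma setReach_not_mem {G : SimpleGraph V} {S X : Set V} {v : V}
    (h : v ∈ SetReach G S X) : v ∉ S := by
  obtain ⟨x, _, p, hp⟩ := h
  exact hp v p.end_mem_support

/-- First-hit lemma: if a walk from `u ∉ A` meets `A`, then there is an initial segment
avoiding `A`, ending at a vertex adjacent to a vertex of `A` which lies on the walk. -/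
lemma first_hit {G : SimpleGraph V} {A : Set V} {u v : V}
    (p : G.Walk u v) (hu : u ∉ A) (hmeet : ∃ w ∈ p.support, w ∈ A) :
    ∃ x y : V, ∃ q : G.Walk u y, x ∈ A ∧ G.Adj y x ∧ x ∈ p.support ∧
      (∀ w ∈ q.support, w ∉ A ∧ w ∈ p.support) := by
  induction p with
  | nil =>
    obtain ⟨w, hw, hwA⟩ := hmeet
    simp only [SimpleGraph.Walk.support_nil, List.mem_singleton] at hw
    exact absurd (hw ▸ hwA) hu
  | @cons a b c h p ih =>
    by_cases hb : b ∈ A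
    · refine ⟨b, a, SimpleGraph.Walk.nil, hb, h, ?_, ?_⟩
      · simp [SimpleGraph.Walk.support_cons]
      · intro w hw
        simp only [SimpleGraph.Walk.support_nil, List.mem_singleton] at hw
        subst hw
        exact ⟨hu, by simp [SimpleGraph.Walk.support_cons]⟩
    · have hmeet' : ∃ w ∈ p.support, w ∈ A := by
        obtain ⟨w, hw, hwA⟩ := hmeet
        simp only [SimpleGraph.Walk.support_cons, List.mem_cons] at hw
        rcases hw with rfl | hw
        · exact absurd hwA hu
        · exact ⟨w, hw, hwA⟩
      obtain ⟨x, y, q, hxA, hyx, hxp, hq⟩ := ih hb hmeet'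
      refine ⟨x, y, SimpleGraph.Walk.cons h q, hxA, hyx, ?_, ?_⟩
      · simp only [SimpleGraph.Walk.support_cons, List.mem_cons]
        exact Or.inr hxp
      · intro w hw
        simp only [SimpleGraph.Walk.support_cons, List.mem_cons] at hw ⊢
        rcases hw with rfl | hw
        · exact ⟨hu, Or.inl rfl⟩
        · exact ⟨(hq w hw).1, Or.inr (hq w hw).2⟩

/-- Every minimal `s,t`-separator of `G' = G[C_s(G−T) ∪ T' ∪ C_t(G−T)]` contained in
`T' ∪ C_t(G'−T')` has cardinality at least `|T'|`. -/
theorem minlSep_induced_card_ge {V : Type*} [Fintype V] (G : SimpleGraph V) (s t : V)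
    (hst : s ≠ t) (hadj : ¬ G.Adj s t) (D : Set V) (hsD : s ∉ D) (htD : t ∉ D)
    (T : Set V) (hT : IsMinSep G ({s} ∪ D) {t} T)
    (T' W : Set V) (hT' : T' = Nbhd G (SetReach G T {s}))
    (hW : W = SetReach G T {s} ∪ T' ∪ SetReach G T {t}) :
    ∀ S : Set V, IsMinlSepIn G W {s} {t} S →
      S ⊆ T' ∪ SetReach G (T' ∪ Wᶜ) {t} → T'.ncard ≤ S.ncard := by
  classical
  intro S hS hSsub
  obtain ⟨⟨hSW, hSs, hSt, hSblock⟩, _⟩ := hS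
  obtain ⟨⟨hTA, hTt, hTblock⟩, hTmin⟩ := hT
  set Cs := SetReach G T {s} with hCs
  set Ct := SetReach G T {t} with hCt
  -- basic memberships
  have hsT : s ∉ T := by
    intro h; exact (hTA.le_bot ⟨h, Or.inl rfl⟩).elim
  have htT : t ∉ T := by
    intro h; exact (hTt.le_bot ⟨h, rfl⟩).elim
  have hsCs : s ∈ Cs := mem_setReach_singleton.mpr ⟨.nil, by simpa⟩
  have htCt : t ∈ Ct := mem_setReach_singleton.mpr ⟨.nil, by simpa⟩
  -- C_s ∩ T = ∅, C_t ∩ T = ∅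
  have hCsT : ∀ v ∈ Cs, v ∉ T := fun v hv => setReach_not_mem hv
  have hCtT : ∀ v ∈ Ct, v ∉ T := fun v hv => setReach_not_mem hv
  -- T' ⊆ T
  have hT'T : T' ⊆ T := by
    intro v hv
    rw [hT'] at hv
    obtain ⟨hvCs, c, hc, hadj'⟩ := hv
    by_contra hvT
    obtain ⟨p, hp⟩ := mem_setReach_singleton.mp hc
    exact hvCs (mem_setReach_singleton.mpr
      ⟨p.concat hadj', fun w hw => by
        rw [SimpleGraph.Walk.support_concat] at hw
        rw [List.mem_append, List.mem_singleton] at hw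
        rcases hw with hw | rfl
        · exact hp w hw
        · exact hvT⟩)
  -- T' ∩ C_s = ∅
  have hT'Cs : ∀ v ∈ T', v ∉ Cs := by
    intro v hv; rw [hT'] at hv; exact hv.1
  -- D ∩ C_t = ∅ (using that T blocks every d ∈ D from t)
  have hDCt : ∀ d ∈ D, d ∉ Ct := by
    intro d hd hdCt
    exact hTblock d (Or.inr hd) t rfl (mem_setReach_singleton.mp hdCt).symm'
  -- C_s ∩ C_t = ∅
  have hCsCt : ∀ v ∈ Cs, v ∉ Ct := by
    intro v hv hv'
    obtain ⟨p, hp⟩ := mem_setReach_singleton.mp hv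
    obtain ⟨q, hq⟩ := (mem_setReach_singleton.mp hv').symm'
    exact hTblock s (Or.inl rfl) t rfl
      ⟨p.append q, fun w hw => by
        rcases (SimpleGraph.Walk.mem_support_append_iff _ _).mp hw with h | h
        · exact hp w h
        · exact hq w h⟩
  -- C_t' ⊆ C_t : vertices reachable from t avoiding T' ∪ Wᶜ are in C_t
  have hCt'Ct : SetReach G (T' ∪ Wᶜ) {t} ⊆ Ct := by
    intro v hv
    obtain ⟨p, hp⟩ := mem_setReach_singleton.mp hv
    refine mem_setReach_singleton.mpr ⟨p, fun w hw hwT => ?_⟩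
    have hwW : w ∈ W := by
      by_contra h
      exact hp w hw (Or.inr h)
    have hwT' : w ∉ T' := fun h => hp w hw (Or.inl h)
    rw [hW] at hwW
    rcases hwW with (h | h) | h
    · exact hCsT w h hwT
    · exact hwT' h
    · exact hCtT w h hwT
  -- S is disjoint from C_s and from T \ T'
  have hSCs : ∀ v ∈ S, v ∉ Cs := by
    intro v hv hvCs
    rcases hSsub hv with h | h
    · exact hT'Cs v h hvCs
    · exact hCsCt v hvCs (hCt'Ct h)
  have hSTT' : ∀ v ∈ S, v ∉ T \ T' := by
    intro v hv ⟨hvT, hvT'⟩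
    rcases hSsub hv with h | h
    · exact hvT' h
    · exact hCtT v (hCt'Ct h) hvT
  -- Main claim: S ∪ (T \ T') is an ({s} ∪ D), {t} separator of G
  have hblock : ∀ a ∈ ({s} ∪ D : Set V),
      ¬ ReachAvoid G (S ∪ (T \ T')) a t := by
    rintro a ha ⟨P, hP⟩
    -- P must meet T (hence T'), since T separates a from t
    have hPT : ∃ w ∈ P.support, w ∈ T := by
      by_contra h
      push_neg at h
      exact hTblock a ha t rfl ⟨P, h⟩
    have hPT' : ∃ w ∈ P.support, w ∈ T' := by
      obtain ⟨w, hw, hwT⟩ := hPT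
      refine ⟨w, hw, ?_⟩
      by_contra h
      exact hP w hw (Or.inr ⟨hwT, h⟩)
    -- take the first T'-vertex along the reverse walk (i.e. the last one on P)
    have htT' : t ∉ T' := fun h => htT (hT'T h)
    obtain ⟨x, y, q, hxT', hyx, hxP, hq⟩ := first_hit P.reverse htT'
      (by obtain ⟨w, hw, h⟩ := hPT'
          exact ⟨w, by rwa [SimpleGraph.Walk.support_reverse, List.mem_reverse], h⟩)
    -- q : walk t → y avoiding T', with support on P; hence q avoids T entirely
    have hqP : ∀ w ∈ q.support, w ∈ P.support := by
      intro w hw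
      have := (hq w hw).2
      rwa [SimpleGraph.Walk.support_reverse, List.mem_reverse] at this
    have hqT : ∀ w ∈ q.support, w ∉ T := by
      intro w hw hwT
      have hwT' : w ∉ T' := (hq w hw).1
      exact hP w (hqP w hw) (Or.inr ⟨hwT, hwT'⟩)
    -- every vertex of q is in C_t
    have hqCt : ∀ w ∈ q.support, w ∈ Ct := by
      intro w hw
      exact mem_setReach_singleton.mpr (support_reachAvoid q hqT w hw)
    -- x ∈ T' gives a neighbor c ∈ C_s
    have hxT'' := hxT'
    rw [hT'] at hxT''
    obtain ⟨hxCs, c, hcCs, hcx⟩ := hxT''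
    obtain ⟨pc, hpc⟩ := mem_setReach_singleton.mp hcCs
    -- build the walk s → c → x → y → t in G[W] avoiding S
    have hPx : x ∈ P.support := by
      rwa [SimpleGraph.Walk.support_reverse, List.mem_reverse] at hxP
    have hwalk : ReachAvoid G (S ∪ Wᶜ) s t := by
      refine ⟨pc.append (SimpleGraph.Walk.cons hcx
        (SimpleGraph.Walk.cons hyx.symm q.reverse)), ?_⟩
      intro w hw
      rw [SimpleGraph.Walk.mem_support_append_iff] at hw
      rcases hw with hw | hw
      · -- w on the s → c segment: w ∈ C_s
        have hwCs : w ∈ Cs :=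
          mem_setReach_singleton.mpr (support_reachAvoid pc hpc w hw)
        rintro (h | h)
        · exact hSCs w h hwCs
        · exact h (hW ▸ Or.inl (Or.inl hwCs))
      · simp only [SimpleGraph.Walk.support_cons, List.mem_cons] at hw
        rcases hw with heq | heq | hw
        · -- w = c ∈ C_s
          subst heq
          rintro (h | h)
          · exact hSCs _ h hcCs
          · exact h (hW ▸ Or.inl (Or.inl hcCs))
        · -- w = x ∈ T'
          subst heq
          rintro (h | h)
          · exact hP _ hPx (Or.inl h)
          · exact h (hW ▸ Or.inl (Or.inr hxT'))
        · -- w on q.reverse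
          rw [SimpleGraph.Walk.support_reverse, List.mem_reverse] at hw
          rintro (h | h)
          · exact hP w (hqP w hw) (Or.inl h)
          · exact h (hW ▸ Or.inr (hqCt w hw))
    exact hSblock s rfl t rfl hwalk
  -- S ∪ (T \ T') is a separator, so T ≤ |S ∪ (T \ T')|
  have hsep : IsSep G ({s} ∪ D) {t} (S ∪ (T \ T')) := by
    refine ⟨?_, ?_, ?_⟩
    case refine_3 =>
      intro a ha b hb
      have hbt : b = t := hb
      rw [hbt]
      exact hblock a ha
    · rw [Set.disjoint_union_left]
      constructor
      · rw [Set.disjoint_left]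
        rintro v hv (rfl | hvD)
        · exact (hSs.le_bot ⟨hv, rfl⟩).elim
        · rcases hSsub hv with h | h
          · exact (hTA.le_bot ⟨hT'T h, Or.inr hvD⟩).elim
          · exact hDCt v hvD (hCt'Ct h)
      · exact Set.disjoint_of_subset_left Set.diff_subset
          (hTA.mono_left le_rfl)
    · rw [Set.disjoint_union_left]
      exact ⟨hSt, Set.disjoint_of_subset_left Set.diff_subset hTt⟩
  have hcard := hTmin _ hsep
  -- cardinality arithmetic
  have hdisj : Disjoint S (T \ T') := by
    rw [Set.disjoint_left]; exact hSTT'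
  have hfin1 : S.Finite := Set.toFinite S
  have hfin2 : (T \ T').Finite := Set.toFinite _
  rw [Set.ncard_union_eq hdisj hfin1 hfin2] at hcard
  have hdiff : (T \ T').ncard = T.ncard - T'.ncard :=
    Set.ncard_diff hT'T (Set.toFinite T')
  have hle : T'.ncard ≤ T.ncard := Set.ncard_le_ncard hT'T (Set.toFinite T)
  omega
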